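/- Let Φ: ℝⁿ → ℝⁿ be continuous and monotone: ⟨Φ(y₁) - Φ(y₂), y₁ - y₂⟩ ≤ 0 for all y₁, y₂ ∈ ℝⁿ. Then for any p ∈ ℝⁿ, the equation x = Φ(x + p) admits a unique solution x ∈ ℝⁿ. -/

import Mathlib

open scoped RealInnerProductSpace
open Finset Filter

namespace Stmt4Aux

abbrev E (n : ℕ) := EuclideanSpace ℝ (Fin n)

theorem inner_eq {m : ℕ} (x y : E m) : ⟪x, y⟫ = ∑ i, x i * y i := by
  simp [PiLp.inner_apply, RCLike.inner_apply]
  exact Finset.sum_congr rfl (fun i _ => mul_comm _ _)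

theorem normsq_eq {m : ℕ} (x : E m) : ‖x‖^2 = ∑ i, (x i)^2 := by
  rw [← real_inner_self_eq_norm_sq, inner_eq]
  exact Finset.sum_congr rfl (fun i _ => (sq (x i)).symm)

theorem snoc_cont' (n : ℕ) :
    Continuous fun q : (Fin n → ℝ) × ℝ => (Fin.snoc q.1 q.2 : Fin (n+1) → ℝ) := by
  apply continuous_pi
  intro i
  refine Fin.lastCases ?_ ?_ i
  · simp only [Fin.snoc_last]; exact continuous_snd
  · intro j
    simp only [Fin.snoc_castSucc]
    exact (continuous_apply j).comp continuous_fst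

theorem snoc_cont (n : ℕ) : Continuous fun q : E n × ℝ => (WithLp.toLp 2 (Fin.snoc q.1.ofLp q.2) : E (n+1)) := by
  have h1 := (EuclideanSpace.equiv (Fin (n+1)) ℝ).symm.continuous
  have h2 := (EuclideanSpace.equiv (Fin n) ℝ).continuous
  exact h1.comp ((snoc_cont' n).comp ((h2.comp continuous_fst).prodMk continuous_snd))

theorem init_cont (n : ℕ) : Continuous fun q : E (n+1) => (WithLp.toLp 2 (Fin.init q.ofLp) : E n) := by
  have h1 := (EuclideanSpace.equiv (Fin n) ℝ).symm.continuous
  have h2 := (EuclideanSpace.equiv (Fin (n+1)) ℝ).continuous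
  have hmid : Continuous fun q : E (n+1) => (fun j : Fin n => q j.castSucc) :=
    continuous_pi fun j => (continuous_apply j.castSucc).comp h2
  exact h1.comp hmid

theorem key : ∀ (n : ℕ) (f : E n → E n), Continuous f →
    (∀ y z : E n, ‖y - z‖^2 ≤ ⟪f y - f z, y - z⟫) → Function.Surjective f := by
  intro n
  induction n with
  | zero =>
    intro f _ _ b
    refine ⟨b, ?_⟩
    ext i
    exact i.elim0
  | succ n IH =>
    intro f hc hm b
    set G : E n × ℝ → E n := fun q => WithLp.toLp 2 (Fin.init (f (WithLp.toLp 2 (Fin.snoc q.1.ofLp q.2))).ofLp) with hGdef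
    have hGc : Continuous G :=
      (init_cont n).comp (hc.comp (snoc_cont n))
    set binit : E n := WithLp.toLp 2 (Fin.init b.ofLp) with hbinit
    have gmono : ∀ (t : ℝ) (y z : E n), ‖y - z‖^2 ≤ ⟪G (y, t) - G (z, t), y - z⟫ := by
      intro t y z
      set X : E (n+1) := WithLp.toLp 2 (Fin.snoc y.ofLp t) with hXd
      set Z : E (n+1) := WithLp.toLp 2 (Fin.snoc z.ofLp t) with hZd
      have hXZ := hm X Z
      have e1 : ⟪f X - f Z, X - Z⟫ = ⟪G (y, t) - G (z, t), y - z⟫ := by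
        rw [inner_eq, inner_eq, Fin.sum_univ_castSucc]
        simp [hGdef, hXd, hZd, Fin.init, PiLp.sub_apply]
      have e2 : ‖X - Z‖^2 = ‖y - z‖^2 := by
        rw [normsq_eq, normsq_eq, Fin.sum_univ_castSucc]
        simp [hXd, hZd, PiLp.sub_apply]
      calc ‖y - z‖^2 = ‖X - Z‖^2 := e2.symm
        _ ≤ _ := hXZ
        _ = _ := e1
    have hex : ∀ t : ℝ, ∃ y : E n, G (y, t) = binit := by
      intro t
      exact IH (fun y => G (y, t)) (hGc.comp (continuous_id.prodMk continuous_const))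
        (fun y z => gmono t y z) binit
    choose x hx using hex
    have hbnd : ∀ t s : ℝ, ‖x t - x s‖ ≤ ‖G (x s, s) - G (x s, t)‖ := by
      intro t s
      have h1 : ‖x t - x s‖^2 ≤ ⟪G (x t, t) - G (x s, t), x t - x s⟫ := gmono t _ _
      rw [hx t, ← hx s] at h1
      have h2 : ⟪G (x s, s) - G (x s, t), x t - x s⟫
          ≤ ‖G (x s, s) - G (x s, t)‖ * ‖x t - x s‖ := real_inner_le_norm _ _
      have h3 : (0:ℝ) ≤ ‖x t - x s‖ := norm_nonneg _
      have h4 : (0:ℝ) ≤ ‖G (x s, s) - G (x s, t)‖ := norm_nonneg _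
      nlinarith [h1.trans h2]
    have hxc : Continuous x := by
      rw [continuous_iff_continuousAt]
      intro s
      rw [ContinuousAt, tendsto_iff_dist_tendsto_zero]
      have hb : ∀ t, dist (x t) (x s) ≤ ‖G (x s, s) - G (x s, t)‖ := by
        intro t; rw [dist_eq_norm]; exact hbnd t s
      have hcont2 : Continuous fun t : ℝ => ‖G (x s, s) - G (x s, t)‖ :=
        (continuous_const.sub (hGc.comp (continuous_const.prodMk continuous_id))).norm
      have h0 : Tendsto (fun t : ℝ => ‖G (x s, s) - G (x s, t)‖) (nhds s) (nhds 0) := by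
        have := hcont2.tendsto s
        simpa using this
      exact squeeze_zero (fun t => dist_nonneg) hb h0
    set φ : ℝ → ℝ := fun t => f (WithLp.toLp 2 (Fin.snoc (x t).ofLp t)) (Fin.last n) with hφdef
    have hφc : Continuous φ := by
      have hlast : Continuous fun q : E (n+1) => q (Fin.last n) :=
        (continuous_apply (Fin.last n)).comp (EuclideanSpace.equiv (Fin (n+1)) ℝ).continuous
      exact hlast.comp (hc.comp ((snoc_cont n).comp (hxc.prodMk continuous_id)))
    have hφmono : ∀ s t : ℝ, s ≤ t → t - s ≤ φ t - φ s := by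
      intro s t hst
      rcases eq_or_lt_of_le hst with rfl | hlt
      · simp
      set X : E (n+1) := WithLp.toLp 2 (Fin.snoc (x t).ofLp t) with hXd
      set Z : E (n+1) := WithLp.toLp 2 (Fin.snoc (x s).ofLp s) with hZd
      have hM := hm X Z
      have e1 : ⟪f X - f Z, X - Z⟫ = (φ t - φ s) * (t - s) := by
        rw [inner_eq, Fin.sum_univ_castSucc]
        have hz : ∀ j : Fin n, (f X - f Z) j.castSucc * (X - Z) j.castSucc = 0 := by
          intro j
          have h1 : f X j.castSucc = binit j := by
            have := congrArg (fun v => v j) (hx t)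
            simpa [hGdef, hXd, Fin.init] using this
          have h2 : f Z j.castSucc = binit j := by
            have := congrArg (fun v => v j) (hx s)
            simpa [hGdef, hZd, Fin.init] using this
          simp [PiLp.sub_apply, h1, h2]
        rw [Finset.sum_congr rfl (fun j _ => hz j), Finset.sum_const_zero]
        simp [hφdef, hXd, hZd, PiLp.sub_apply]
      have e2 : (t - s)^2 ≤ ‖X - Z‖^2 := by
        rw [normsq_eq, Fin.sum_univ_castSucc]
        have hnn : (0:ℝ) ≤ ∑ j : Fin n, ((X - Z) j.castSucc)^2 :=
          Finset.sum_nonneg (fun j _ => sq_nonneg _)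
        have hl : (X - Z) (Fin.last n) = t - s := by
          simp [hXd, hZd, PiLp.sub_apply]
        rw [hl]
        linarith
      have h5 : (t - s)^2 ≤ (φ t - φ s) * (t - s) := by
        calc (t-s)^2 ≤ _ := e2
          _ ≤ _ := hM
          _ = _ := e1
      have hpos : 0 < t - s := by linarith
      nlinarith [h5]
    set β : ℝ := b (Fin.last n) with hβ
    set T : ℝ := |β - φ 0| + 1 with hT
    have hT0 : 0 ≤ T := by positivity
    have habs1 : β - φ 0 ≤ |β - φ 0| := le_abs_self _
    have habs2 : -(β - φ 0) ≤ |β - φ 0| := neg_le_abs _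
    have h1 : φ (-T) ≤ β := by
      have := hφmono (-T) 0 (by linarith)
      linarith
    have h2 : β ≤ φ T := by
      have := hφmono 0 T (by linarith)
      linarith
    have hmem : β ∈ Set.Icc (φ (-T)) (φ T) := ⟨h1, h2⟩
    obtain ⟨t, _, ht⟩ := intermediate_value_Icc (by linarith : -T ≤ T) hφc.continuousOn hmem
    refine ⟨WithLp.toLp 2 (Fin.snoc (x t).ofLp t), ?_⟩
    ext i
    refine Fin.lastCases ?_ ?_ i
    · exact ht
    · intro j
      have := congrArg (fun v => v j) (hx t)
      simpa [hGdef, hbinit, Fin.init] using this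

end Stmt4Aux

open Stmt4Aux in
theorem stmt_4 (n : ℕ) (Φ : EuclideanSpace ℝ (Fin n) → EuclideanSpace ℝ (Fin n))
    (hcont : Continuous Φ)
    (hMono : ∀ y₁ y₂, (inner ℝ (Φ y₁ - Φ y₂) (y₁ - y₂) : ℝ) ≤ 0)
    (p : EuclideanSpace ℝ (Fin n)) :
    ∃! x : EuclideanSpace ℝ (Fin n), x = Φ (x + p) := by
  set f : E n → E n := fun x => x - Φ (x + p) with hf
  have hfc : Continuous f := continuous_id.sub (hcont.comp (continuous_id.add continuous_const))
  have hfm : ∀ y z : E n, ‖y - z‖^2 ≤ ⟪f y - f z, y - z⟫ := by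
    intro y z
    have h1 : ⟪Φ (y + p) - Φ (z + p), y - z⟫ ≤ 0 := by
      have := hMono (y + p) (z + p)
      have he : (y + p) - (z + p) = y - z := by abel
      rwa [he] at this
    have he2 : f y - f z = (y - z) - (Φ (y + p) - Φ (z + p)) := by
      simp only [hf]; abel
    rw [he2, inner_sub_left, real_inner_self_eq_norm_sq]
    linarith
  obtain ⟨x, hx⟩ := key n f hfc hfm 0
  refine ⟨x, ?_, ?_⟩
  · have h0 : x - Φ (x + p) = 0 := hx
    linear_combination (norm := module) h0
  · intro y hy
    have hfy : f y = 0 := by simp [hf, ← hy]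
    have hq := hfm y x
    rw [hfy, hx, sub_zero, inner_zero_left] at hq
    have h0 : ‖y - x‖ = 0 := by nlinarith [norm_nonneg (y - x)]
    have hyx : y - x = 0 := norm_eq_zero.mp h0
    linear_combination (norm := module) hyx
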